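/- Let p₀₀, p₀₁, p₁₀, p₁₁ be strictly positive reals summing to 1 with marginals a₀ = p₀₀ + p₀₁, a₁ = p₁₀ + p₁₁, b₀ = p₀₀ + p₁₀, b₁ = p₀₁ + p₁₁, and for ε ∈ ℝ let q(ε) = (p₀₀ + ε, p₀₁ − ε, p₁₀ − ε, p₁₁ + ε) and MI(ε) = ∑_{a,b} q(ε)_{ab} · log( q(ε)_{ab} / (a_a · b_b) ). If p₀₀ · p₁₁ > p₀₁ · p₁₀ then there exists ε₀ > 0 such that MI(ε) > MI(0) for all 0 < ε < ε₀; if p₀₀ · p₁₁ < p₀₁ · p₁₀ then there exists ε₀ > 0 such that MI(ε) < MI(0) for all 0 < ε < ε₀. Hence the same margin-preserving diagonal mass move can either increase or decrease mutual information depending on the joint distribution. -/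

import Mathlib

open Filter Topology

private lemma hd_add (p c : ℝ) (hp : 0 < p) (hc : 0 < c) :
    HasDerivAt (fun ε : ℝ => (p + ε) * Real.log ((p + ε) / c)) (Real.log (p / c) + 1) 0 := by
  have h1 : HasDerivAt (fun ε : ℝ => p + ε) 1 0 := by
    simpa using (hasDerivAt_id (0 : ℝ)).const_add p
  have h2 : HasDerivAt (fun ε : ℝ => (p + ε) / c) (1 / c) 0 := h1.div_const c
  have hx : ((p + 0) / c) ≠ 0 := by positivity
  have h3 : HasDerivAt Real.log ((p + 0) / c)⁻¹ ((p + 0) / c) := Real.hasDerivAt_log hx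
  have h4 : HasDerivAt (fun ε : ℝ => Real.log ((p + ε) / c)) (((p + 0) / c)⁻¹ * (1 / c)) 0 :=
    by have := h3.comp 0 h2; exact this
  have h5 : HasDerivAt (fun ε : ℝ => (p + ε) * Real.log ((p + ε) / c)) _ 0 := h1.mul h4
  convert h5 using 1
  rw [add_zero]
  field_simp

private lemma hd_sub (p c : ℝ) (hp : 0 < p) (hc : 0 < c) :
    HasDerivAt (fun ε : ℝ => (p - ε) * Real.log ((p - ε) / c)) (-(Real.log (p / c) + 1)) 0 := by
  have h1 : HasDerivAt (fun ε : ℝ => p - ε) (-1) 0 := by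
    simpa using (hasDerivAt_id (0 : ℝ)).const_sub p
  have h2 : HasDerivAt (fun ε : ℝ => (p - ε) / c) (-1 / c) 0 := h1.div_const c
  have hx : ((p - 0) / c) ≠ 0 := by
    rw [sub_zero]; positivity
  have h3 : HasDerivAt Real.log ((p - 0) / c)⁻¹ ((p - 0) / c) := Real.hasDerivAt_log hx
  have h4 : HasDerivAt (fun ε : ℝ => Real.log ((p - ε) / c)) (((p - 0) / c)⁻¹ * (-1 / c)) 0 :=
    by have := h3.comp 0 h2; exact this
  have h5 : HasDerivAt (fun ε : ℝ => (p - ε) * Real.log ((p - ε) / c)) _ 0 := h1.mul h4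
  convert h5 using 1
  rw [sub_zero]
  field_simp
  ring

private lemma key_pos (f : ℝ → ℝ) (L : ℝ) (hf : HasDerivAt f L 0) (hL : 0 < L) :
    ∃ ε₀ > 0, ∀ ε : ℝ, 0 < ε → ε < ε₀ → f 0 < f ε := by
  have ht := hasDerivAt_iff_tendsto_slope.mp hf
  have h2 : ∀ᶠ y in 𝓝[≠] (0 : ℝ), 0 < slope f 0 y := ht.eventually (eventually_gt_nhds hL)
  rw [eventually_nhdsWithin_iff] at h2
  obtain ⟨δ, hδ, H⟩ := Metric.eventually_nhds_iff.mp h2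
  refine ⟨δ, hδ, fun ε hε hεδ => ?_⟩
  have hd : dist ε (0 : ℝ) < δ := by
    simpa [Real.dist_eq, abs_of_pos hε] using hεδ
  have hs : 0 < slope f 0 ε := H hd (by simpa using hε.ne')
  have : 0 < (f ε - f 0) / ε := by simpa [slope_def_field] using hs
  rcases div_pos_iff.mp this with ⟨hnum, _⟩ | ⟨_, hden⟩
  · linarith
  · linarith

private lemma key_neg (f : ℝ → ℝ) (L : ℝ) (hf : HasDerivAt f L 0) (hL : L < 0) :
    ∃ ε₀ > 0, ∀ ε : ℝ, 0 < ε → ε < ε₀ → f ε < f 0 := by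
  obtain ⟨ε₀, hε₀, H⟩ := key_pos (fun x => -(f x)) (-L) hf.neg (by linarith)
  exact ⟨ε₀, hε₀, fun ε hε hεδ => by have := H ε hε hεδ; linarith⟩

noncomputable def mi2x2 (p00 p01 p10 p11 ε : ℝ) : ℝ :=
  (p00 + ε) * Real.log ((p00 + ε) / ((p00 + p01) * (p00 + p10))) +
  (p01 - ε) * Real.log ((p01 - ε) / ((p00 + p01) * (p01 + p11))) +
  (p10 - ε) * Real.log ((p10 - ε) / ((p10 + p11) * (p00 + p10))) +
  (p11 + ε) * Real.log ((p11 + ε) / ((p10 + p11) * (p01 + p11)))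

theorem mi2x2_sign_near_zero (p00 p01 p10 p11 : ℝ)
    (h00 : 0 < p00) (h01 : 0 < p01) (h10 : 0 < p10) (h11 : 0 < p11)
    (hsum : p00 + p01 + p10 + p11 = 1) :
    (p00 * p11 > p01 * p10 →
      ∃ ε₀ > 0, ∀ ε : ℝ, 0 < ε → ε < ε₀ →
        mi2x2 p00 p01 p10 p11 ε > mi2x2 p00 p01 p10 p11 0) ∧
    (p00 * p11 < p01 * p10 →
      ∃ ε₀ > 0, ∀ ε : ℝ, 0 < ε → ε < ε₀ →
        mi2x2 p00 p01 p10 p11 ε < mi2x2 p00 p01 p10 p11 0) := by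
  set a0 := p00 + p01 with ha0
  set a1 := p10 + p11 with ha1
  set b0 := p00 + p10 with hb0
  set b1 := p01 + p11 with hb1
  have ha0p : 0 < a0 := by positivity
  have ha1p : 0 < a1 := by positivity
  have hb0p : 0 < b0 := by positivity
  have hb1p : 0 < b1 := by positivity
  set L : ℝ := Real.log (p00 * p11) - Real.log (p01 * p10) with hLdef
  have hderiv : HasDerivAt (fun ε => mi2x2 p00 p01 p10 p11 ε) L 0 := by
    have h1 := hd_add p00 (a0 * b0) h00 (by positivity)
    have h2 := hd_sub p01 (a0 * b1) h01 (by positivity)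
    have h3 := hd_sub p10 (a1 * b0) h10 (by positivity)
    have h4 := hd_add p11 (a1 * b1) h11 (by positivity)
    have h := ((h1.add h2).add h3).add h4
    have hLval : (Real.log (p00 / (a0 * b0)) + 1) + -(Real.log (p01 / (a0 * b1)) + 1)
        + -(Real.log (p10 / (a1 * b0)) + 1) + (Real.log (p11 / (a1 * b1)) + 1) = L := by
      rw [hLdef,
        Real.log_div h00.ne' (by positivity), Real.log_div h01.ne' (by positivity),
        Real.log_div h10.ne' (by positivity), Real.log_div h11.ne' (by positivity),
        Real.log_mul ha0p.ne' hb0p.ne', Real.log_mul ha0p.ne' hb1p.ne',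
        Real.log_mul ha1p.ne' hb0p.ne', Real.log_mul ha1p.ne' hb1p.ne',
        Real.log_mul h00.ne' h11.ne', Real.log_mul h01.ne' h10.ne']
      ring
    rw [← hLval]
    exact h
  constructor
  · intro hgt
    have hL : 0 < L := by
      rw [hLdef, sub_pos]
      exact Real.log_lt_log (by positivity) hgt
    exact key_pos _ L hderiv hL
  · intro hlt
    have hL : L < 0 := by
      rw [hLdef, sub_neg]
      exact Real.log_lt_log (by positivity) hlt
    exact key_neg _ L hderiv hL
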